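/- Context-free monoidal languages are closed under images of strict monoidal functors: if L is a context-free monoidal language over C and F : C → D is a strict monoidal functor, then F[L] is a context-free monoidal language over D. -/

import Mathlib

open CategoryTheory

/-- A strict monoidal structure on a category whose objects form a monoid:
a tensor on morphisms that is functorial and strictly associative and unital. -/
class SMC (C : Type u) [Category.{v} C] [Monoid C] where
  tens : ∀ {W X Y Z : C}, (W ⟶ X) → (Y ⟶ Z) → (W * Y ⟶ X * Z)
  tens_id : ∀ (X Y : C), tens (𝟙 X) (𝟙 Y) = 𝟙 (X * Y)
  tens_comp : ∀ {X₁ X₂ X₃ Y₁ Y₂ Y₃ : C} (f₁ : X₁ ⟶ X₂) (f₂ : X₂ ⟶ X₃)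
      (g₁ : Y₁ ⟶ Y₂) (g₂ : Y₂ ⟶ Y₃),
      tens (f₁ ≫ f₂) (g₁ ≫ g₂) = tens f₁ g₁ ≫ tens f₂ g₂
  tens_assoc : ∀ {X X' Y Y' Z Z' : C} (f : X ⟶ X') (g : Y ⟶ Y') (h : Z ⟶ Z'),
      tens (tens f g) h =
        eqToHom (mul_assoc X Y Z) ≫ tens f (tens g h) ≫ eqToHom (mul_assoc X' Y' Z').symm
  tens_one_left : ∀ {X Y : C} (f : X ⟶ Y),
      tens (𝟙 (1 : C)) f = eqToHom (one_mul X) ≫ f ≫ eqToHom (one_mul Y).symm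
  tens_one_right : ∀ {X Y : C} (f : X ⟶ Y),
      tens f (𝟙 (1 : C)) = eqToHom (mul_one X) ≫ f ≫ eqToHom (mul_one Y).symm

/-- A raw optic over a strict monoidal category `C`, from the list of pairs `l` to the
pair `⟨X|T⟩`: a tuple of morphisms `f₀ : X ⟶ M₁*A₁*N₁`,
`fᵢ : Mᵢ*Bᵢ*Nᵢ ⟶ Mᵢ₊₁*Aᵢ₊₁*Nᵢ₊₁`, `fₙ : Mₙ*Bₙ*Nₙ ⟶ T` for a choice of middle objects
`Mᵢ`, `Nᵢ`.  A nullary raw optic is a single morphism `X ⟶ T`. -/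
inductive RawT (C : Type u) [Category.{v} C] [Monoid C] [SMC C] :
    C → List (C × C) → C → Type (max u v)
  | nil {X T : C} (f : X ⟶ T) : RawT C X [] T
  | cons {X T A B : C} {l : List (C × C)} (M N : C) (f : X ⟶ M * A * N)
      (rest : RawT C (M * B * N) l T) : RawT C X ((A, B) :: l) T

namespace RawT

variable {C : Type u} [Category.{v} C] [Monoid C] [SMC C]

def castL {X T : C} {l l' : List (C × C)} (h : l = l') (r : RawT C X l T) :
    RawT C X l' T := by subst h; exact r

def castSrc {X X' T : C} {l : List (C × C)} (h : X = X') (r : RawT C X l T) :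
    RawT C X' l T := by subst h; exact r

/-- Whiskering a raw optic on both sides by objects `M`, `N`. -/
def whisk (M N : C) : ∀ {X T : C} {l : List (C × C)},
    RawT C X l T → RawT C (M * X * N) l (M * T * N)
  | _, _, _, .nil f => .nil (SMC.tens (SMC.tens (𝟙 M) f) (𝟙 N))
  | _, _, _, .cons (A := A) (B := B) M' N' f rest =>
      .cons (M * M') (N' * N)
        (SMC.tens (SMC.tens (𝟙 M) f) (𝟙 N) ≫ eqToHom (by simp [mul_assoc]))
        ((whisk M N rest).castSrc (by simp [mul_assoc]))

/-- Precompose a raw optic with a morphism. -/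
def precomp {W X T : C} {l : List (C × C)} (e : W ⟶ X) :
    RawT C X l T → RawT C W l T
  | .nil f => .nil (e ≫ f)
  | .cons M N f rest => .cons M N (e ≫ f) rest

/-- Concatenation of raw optics. -/
def append : ∀ {X T U : C} {l l' : List (C × C)},
    RawT C X l T → RawT C T l' U → RawT C X (l ++ l') U
  | _, _, _, _, _, .nil f, s => s.precomp f
  | _, _, _, _, _, .cons M N f rest, s => .cons M N f (rest.append s)

/-- Composition of raw optics: substitution of a raw optic `G` into the hole of `F`
in position `l₁.length`, whiskering the components of `G` by the middle objects. -/
def subst : ∀ (l₁ : List (C × C)) {l₂ : List (C × C)} {X T A B : C} {l' : List (C × C)},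
    RawT C X (l₁ ++ (A, B) :: l₂) T → RawT C A l' B → RawT C X (l₁ ++ l' ++ l₂) T
  | [], _, _, _, _, _, _, F, G =>
      match F with
      | .cons M N f rest => ((whisk M N G).append rest).precomp f
  | _ :: l₁, _, _, _, _, _, _, F, G =>
      match F with
      | .cons M N f rest => .cons M N f (subst l₁ rest G)

/-- The identity raw optic on `⟨A|B⟩`. -/
def idRaw (A B : C) : RawT C A [(A, B)] B :=
  .cons 1 1 (eqToHom (by simp)) (.nil (eqToHom (by simp)))

end RawT

/-- Diagram contexts over a strict monoidal category `C`: formal terms built from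
morphisms of `C`, named typed holes, sequential and parallel composition. -/
inductive CTm (C : Type u) [Category.{v} C] [Monoid C] [SMC C] : C → C → Type (max u v)
  | of {X Y : C} (f : X ⟶ Y) : CTm C X Y
  | hole (n : ℕ) (A B : C) : CTm C A B
  | seq {X Y Z : C} : CTm C X Y → CTm C Y Z → CTm C X Z
  | par {X Y X' Y' : C} : CTm C X Y → CTm C X' Y' → CTm C (X * X') (Y * Y')

namespace CTm

variable {C : Type u} [Category.{v} C] [Monoid C] [SMC C]

def castc {X X' Y Y' : C} (h1 : X = X') (h2 : Y = Y') (t : CTm C X Y) : CTm C X' Y' := by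
  subst h1; subst h2; exact t

/-- Renaming of holes. -/
def rename (ρ : ℕ → ℕ) : ∀ {X Y : C}, CTm C X Y → CTm C X Y
  | _, _, .of f => .of f
  | _, _, .hole n A B => .hole (ρ n) A B
  | _, _, .seq a b => .seq (a.rename ρ) (b.rename ρ)
  | _, _, .par a b => .par (a.rename ρ) (b.rename ρ)

/-- The list of (named, typed) holes occurring in a diagram context, in order. -/
def holesOf : ∀ {X Y : C}, CTm C X Y → List (ℕ × C × C)
  | _, _, .of _ => []
  | _, _, .hole n A B => [(n, A, B)]
  | _, _, .seq a b => a.holesOf ++ b.holesOf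
  | _, _, .par a b => a.holesOf ++ b.holesOf

/-- Filling the holes named `n` of type `⟨A|B⟩` with a diagram context `u`. -/
def fill [DecidableEq C] (n : ℕ) {A B : C} (u : CTm C A B) :
    ∀ {X Y : C}, CTm C X Y → CTm C X Y
  | _, _, .of f => .of f
  | _, _, .hole m A' B' =>
      if h : m = n ∧ A = A' ∧ B = B' then u.castc h.2.1 h.2.2 else .hole m A' B'
  | _, _, .seq a b => .seq (fill n u a) (fill n u b)
  | _, _, .par a b => .par (fill n u a) (fill n u b)

/-- Evaluation of a hole-free diagram context as a morphism of `C`. -/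
def evalO : ∀ {X Y : C}, CTm C X Y → Option (X ⟶ Y)
  | _, _, .of f => some f
  | _, _, .hole _ _ _ => none
  | _, _, .seq a b => do pure ((← a.evalO) ≫ (← b.evalO))
  | _, _, .par a b => do pure (SMC.tens (← a.evalO) (← b.evalO))

end CTm

/-- Equality of diagram contexts over a strict monoidal category: the congruence
generated by the strict monoidal equations together with the identification of formal
composites of morphisms of `C` with actual composites in `C`. -/
inductive CTmEq (C : Type u) [Category.{v} C] [Monoid C] [SMC C] :
    ∀ {X Y : C}, CTm C X Y → CTm C X Y → Prop
  | refl {X Y} (t : CTm C X Y) : CTmEq C t t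
  | symm {X Y} {t u : CTm C X Y} : CTmEq C t u → CTmEq C u t
  | trans {X Y} {t u v : CTm C X Y} : CTmEq C t u → CTmEq C u v → CTmEq C t v
  | seq_congr {X Y Z} {t t' : CTm C X Y} {u u' : CTm C Y Z} :
      CTmEq C t t' → CTmEq C u u' → CTmEq C (t.seq u) (t'.seq u')
  | par_congr {X Y X' Y'} {t t' : CTm C X Y} {u u' : CTm C X' Y'} :
      CTmEq C t t' → CTmEq C u u' → CTmEq C (t.par u) (t'.par u')
  | of_comp {X Y Z} (f : X ⟶ Y) (g : Y ⟶ Z) :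
      CTmEq C (.of (f ≫ g)) ((CTm.of f).seq (.of g))
  | of_tens {X Y X' Y'} (f : X ⟶ Y) (g : X' ⟶ Y') :
      CTmEq C (.of (SMC.tens f g)) ((CTm.of f).par (.of g))
  | seq_assoc {W X Y Z} (t₁ : CTm C W X) (t₂ : CTm C X Y) (t₃ : CTm C Y Z) :
      CTmEq C ((t₁.seq t₂).seq t₃) (t₁.seq (t₂.seq t₃))
  | seq_id_right {X Y} (t : CTm C X Y) : CTmEq C (t.seq (.of (𝟙 Y))) t
  | seq_id_left {X Y} (t : CTm C X Y) : CTmEq C ((CTm.of (𝟙 X)).seq t) t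
  | par_assoc {X₁ Y₁ X₂ Y₂ X₃ Y₃} (t₁ : CTm C X₁ Y₁) (t₂ : CTm C X₂ Y₂) (t₃ : CTm C X₃ Y₃) :
      CTmEq C (((t₁.par t₂).par t₃).castc (mul_assoc X₁ X₂ X₃) (mul_assoc Y₁ Y₂ Y₃))
        (t₁.par (t₂.par t₃))
  | par_one_left {X Y} (t : CTm C X Y) :
      CTmEq C (((CTm.of (𝟙 (1 : C))).par t).castc (one_mul X) (one_mul Y)) t
  | par_one_right {X Y} (t : CTm C X Y) :
      CTmEq C ((t.par (.of (𝟙 (1 : C)))).castc (mul_one X) (mul_one Y)) t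
  | interchange {X Y Z X' Y' Z'} (t₁ : CTm C X Y) (t₂ : CTm C Y Z)
      (t₃ : CTm C X' Y') (t₄ : CTm C Y' Z') :
      CTmEq C ((t₁.seq t₂).par (t₃.seq t₄)) ((t₁.par t₃).seq (t₂.par t₄))
  | cast_eq {X X' Y Y'} (h1 : X = X') (h2 : Y = Y') (t : CTm C X Y) :
      CTmEq C (t.castc h1 h2) ((CTm.of (CategoryTheory.eqToHom h1.symm)).seq
        (t.seq (.of (CategoryTheory.eqToHom h2))))

/-- Gluing a raw optic into a diagram context, numbering its holes `k, k+1, …`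
from left to right. -/
def RawT.glue {C : Type u} [Category.{v} C] [Monoid C] [SMC C] :
    ∀ {X T : C} {l : List (C × C)}, ℕ → RawT C X l T → CTm C X T
  | _, _, _, _, .nil f => .of f
  | _, _, _, k, .cons (A := A) (B := B) M N f rest =>
      (CTm.of f).seq
        ((((CTm.of (𝟙 M)).par (.hole k A B)).par (.of (𝟙 N))).seq (rest.glue (k + 1)))

open CategoryTheory

/-- A context-free monoidal grammar over a strict monoidal category `C`: a finite
multigraph of non-terminals typed by pairs of objects of `C`, each production being
mapped to a diagram context whose holes are exactly the (typed) inputs of the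
production. -/
structure CFG (C : Type u) [Category.{v} C] [Monoid C] [SMC C] where
  V : Type
  finV : Finite V
  ty : V → C × C
  Prd : List V → V → Type
  finP : Finite ((l : List V) × (Y : V) × Prd l Y)
  rule : ∀ {l : List V} {Y : V}, Prd l Y → CTm C (ty Y).1 (ty Y).2
  rule_holes : ∀ {l : List V} {Y : V} (r : Prd l Y),
    (rule r).holesOf.Perm ((List.range l.length).zip (l.map ty))

namespace CFG

variable {C : Type u} [Category.{v} C] [Monoid C] [SMC C]

mutual
/-- Closed derivations of the free multicategory on the multigraph of a grammar. -/
inductive Deriv (𝒢 : CFG C) : 𝒢.V → Type (max u v)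
  | node {l : List 𝒢.V} {Y : 𝒢.V} (r : 𝒢.Prd l Y) (ds : DerivList 𝒢 l) : Deriv 𝒢 Y
inductive DerivList (𝒢 : CFG C) : List 𝒢.V → Type (max u v)
  | nil : DerivList 𝒢 []
  | cons {v : 𝒢.V} {l : List 𝒢.V} : Deriv 𝒢 v → DerivList 𝒢 l → DerivList 𝒢 (v :: l)
end

variable [DecidableEq C]

mutual
/-- The image of a closed derivation under the multifunctor induced by the grammar:
the diagram context obtained by recursively filling the holes of the rules. -/
def evalTm {𝒢 : CFG C} : ∀ {v : 𝒢.V}, Deriv 𝒢 v → CTm C (𝒢.ty v).1 (𝒢.ty v).2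
  | _, .node r ds => fillListFrom 0 ds (𝒢.rule r)
def fillListFrom {𝒢 : CFG C} {X Y : C} :
    ∀ {l : List 𝒢.V}, ℕ → DerivList 𝒢 l → CTm C X Y → CTm C X Y
  | _, _, .nil, t => t
  | _, k, .cons d ds, t => fillListFrom (k + 1) ds (CTm.fill k (evalTm d) t)
end

/-- The language of a context-free monoidal grammar at a start sort. -/
def lang (𝒢 : CFG C) (S : 𝒢.V) : Set ((𝒢.ty S).1 ⟶ (𝒢.ty S).2) :=
  {f | ∃ d : Deriv 𝒢 S, (evalTm d).evalO = some f}

/-- The language, transported along an identification of the type of the start sort. -/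
def langAt (𝒢 : CFG C) (S : 𝒢.V) {X Y : C} (h : 𝒢.ty S = (X, Y)) : Set (X ⟶ Y) :=
  {f | ∃ g ∈ 𝒢.lang S,
    f = eqToHom (congrArg Prod.fst h).symm ≫ g ≫ eqToHom (congrArg Prod.snd h)}

end CFG

open CategoryTheory

/-- A strict monoidal functor between strict monoidal categories. -/
structure SMF (C : Type u) (D : Type u') [Category.{v} C] [Monoid C] [SMC C]
    [Category.{v'} D] [Monoid D] [SMC D] where
  obj : C →* D
  map : ∀ {X Y : C}, (X ⟶ Y) → (obj X ⟶ obj Y)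
  map_id : ∀ X : C, map (𝟙 X) = 𝟙 (obj X)
  map_comp : ∀ {X Y Z : C} (f : X ⟶ Y) (g : Y ⟶ Z), map (f ≫ g) = map f ≫ map g
  map_tens : ∀ {W X Y Z : C} (f : W ⟶ X) (g : Y ⟶ Z),
      map (SMC.tens f g) =
        eqToHom (obj.map_mul W Y) ≫ SMC.tens (map f) (map g) ≫ eqToHom (obj.map_mul X Z).symm

section Aux

open CategoryTheory

variable {C : Type u} {D : Type u'} [Category.{v} C] [Monoid C] [SMC C]
  [Category.{v'} D] [Monoid D] [SMC D]

theorem SMF.map_eqToHom (F : SMF C D) {X Y : C} (h : X = Y) :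
    F.map (eqToHom h) = eqToHom (congrArg F.obj h) := by
  subst h; simp [F.map_id]

/-- Image of a diagram context under a strict monoidal functor. -/
def CTm.mapF (F : SMF C D) : ∀ {X Y : C}, CTm C X Y → CTm D (F.obj X) (F.obj Y)
  | _, _, .of f => .of (F.map f)
  | _, _, .hole n A B => .hole n (F.obj A) (F.obj B)
  | _, _, .seq a b => .seq (a.mapF F) (b.mapF F)
  | _, _, .par a b =>
      ((a.mapF F).par (b.mapF F)).castc (F.obj.map_mul _ _).symm (F.obj.map_mul _ _).symm

theorem CTm.holesOf_castc {X X' Y Y' : C} (h1 : X = X') (h2 : Y = Y') (t : CTm C X Y) :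
    (t.castc h1 h2).holesOf = t.holesOf := by
  subst h1; subst h2; rfl

theorem CTm.evalO_castc {X X' Y Y' : C} (h1 : X = X') (h2 : Y = Y') (t : CTm C X Y) :
    (t.castc h1 h2).evalO = t.evalO.map (fun f => eqToHom h1.symm ≫ f ≫ eqToHom h2) := by
  subst h1; subst h2
  show t.evalO = _
  cases t.evalO <;> simp

theorem CTm.mapF_castc (F : SMF C D) {X X' Y Y' : C} (h1 : X = X') (h2 : Y = Y')
    (t : CTm C X Y) :
    (t.castc h1 h2).mapF F = (t.mapF F).castc (congrArg F.obj h1) (congrArg F.obj h2) := by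
  subst h1; subst h2; rfl

theorem CTm.fill_castc [DecidableEq C] (n : ℕ) {A B : C} (u : CTm C A B)
    {X X' Y Y' : C} (h1 : X = X') (h2 : Y = Y') (t : CTm C X Y) :
    CTm.fill n u (t.castc h1 h2) = (CTm.fill n u t).castc h1 h2 := by
  subst h1; subst h2; rfl

theorem CTm.holesOf_mapF (F : SMF C D) : ∀ {X Y : C} (t : CTm C X Y),
    (t.mapF F).holesOf = t.holesOf.map (fun p => (p.1, F.obj p.2.1, F.obj p.2.2))
  | _, _, .of f => rfl
  | _, _, .hole n A B => rfl
  | _, _, .seq a b => by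
      simp [CTm.mapF, CTm.holesOf, holesOf_mapF F a, holesOf_mapF F b]
  | _, _, .par a b => by
      simp [CTm.mapF, CTm.holesOf, CTm.holesOf_castc, holesOf_mapF F a, holesOf_mapF F b]

theorem CTm.evalO_mapF (F : SMF C D) : ∀ {X Y : C} (t : CTm C X Y),
    (t.mapF F).evalO = t.evalO.map F.map
  | _, _, .of f => rfl
  | _, _, .hole n A B => rfl
  | _, _, .seq a b => by
      cases ha : a.evalO <;> cases hb : b.evalO <;>
        simp [CTm.mapF, CTm.evalO, evalO_mapF F a, evalO_mapF F b, ha, hb, F.map_comp]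
  | _, _, .par a b => by
      cases ha : a.evalO <;> cases hb : b.evalO <;>
        simp [CTm.mapF, CTm.evalO, CTm.evalO_castc, evalO_mapF F a, evalO_mapF F b, ha, hb,
          F.map_tens]

theorem CTm.mapF_fill [DecidableEq C] [DecidableEq D] (F : SMF C D) (n : ℕ) {A B : C}
    (u : CTm C A B) : ∀ {X Y : C} (t : CTm C X Y),
    (∀ p ∈ t.holesOf, p.1 = n → p.2.1 = A ∧ p.2.2 = B) →
    (CTm.fill n u t).mapF F = CTm.fill n (u.mapF F) (t.mapF F)
  | _, _, .of f, _ => rfl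
  | _, _, .hole m A' B', H => by
      by_cases hm : m = n
      · subst hm
        obtain ⟨hA, hB⟩ := H (m, A', B') (by simp [CTm.holesOf]) rfl
        dsimp at hA hB; subst hA; subst hB
        rw [show CTm.fill m u (CTm.hole m A' B') = u.castc rfl rfl from
            dif_pos ⟨rfl, rfl, rfl⟩]
        show (u.castc rfl rfl).mapF F =
          CTm.fill m (u.mapF F) (CTm.hole m (F.obj A') (F.obj B'))
        rw [show CTm.fill m (u.mapF F) (CTm.hole m (F.obj A') (F.obj B')) =
            (u.mapF F).castc rfl rfl from dif_pos ⟨rfl, rfl, rfl⟩]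
        rfl
      · rw [show CTm.fill n u (CTm.hole m A' B') = CTm.hole m A' B' from
            dif_neg (fun h => hm h.1)]
        show CTm.mapF F (CTm.hole m A' B') =
          CTm.fill n (u.mapF F) (CTm.hole m (F.obj A') (F.obj B'))
        rw [show CTm.fill n (u.mapF F) (CTm.hole m (F.obj A') (F.obj B')) =
            CTm.hole m (F.obj A') (F.obj B') from dif_neg (fun h => hm h.1)]
        rfl
  | _, _, .seq a b, H => by
      show ((CTm.fill n u a).mapF F).seq ((CTm.fill n u b).mapF F) =
        (CTm.fill n (u.mapF F) (a.mapF F)).seq (CTm.fill n (u.mapF F) (b.mapF F))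
      rw [CTm.mapF_fill F n u a (fun p hp => H p (by simp [CTm.holesOf, hp])),
        CTm.mapF_fill F n u b (fun p hp => H p (by simp [CTm.holesOf, hp]))]
  | _, _, .par a b, H => by
      show (((CTm.fill n u a).mapF F).par ((CTm.fill n u b).mapF F)).castc
          (F.obj.map_mul _ _).symm (F.obj.map_mul _ _).symm =
        CTm.fill n (u.mapF F) (((a.mapF F).par (b.mapF F)).castc
          (F.obj.map_mul _ _).symm (F.obj.map_mul _ _).symm)
      rw [CTm.fill_castc]
      rw [CTm.mapF_fill F n u a (fun p hp => H p (by simp [CTm.holesOf, hp])),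
        CTm.mapF_fill F n u b (fun p hp => H p (by simp [CTm.holesOf, hp]))]
      rfl

theorem CTm.holesOf_fill [DecidableEq C] (n : ℕ) {A B : C} (u : CTm C A B)
    (hu : u.holesOf = []) : ∀ {X Y : C} (t : CTm C X Y),
    (∀ p ∈ t.holesOf, p.1 = n → p.2.1 = A ∧ p.2.2 = B) →
    ∀ p ∈ (CTm.fill n u t).holesOf, p ∈ t.holesOf ∧ p.1 ≠ n
  | _, _, .of f, _, p, hp => by simp [CTm.fill, CTm.holesOf] at hp
  | _, _, .hole m A' B', H, p, hp => by
      by_cases hm : m = n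
      · subst hm
        obtain ⟨hA, hB⟩ := H (m, A', B') (by simp [CTm.holesOf]) rfl
        dsimp at hA hB; subst hA; subst hB
        rw [show CTm.fill m u (CTm.hole m A' B') = u.castc rfl rfl from
          dif_pos ⟨rfl, rfl, rfl⟩] at hp
        rw [CTm.holesOf_castc, hu] at hp
        simp at hp
      · rw [show CTm.fill n u (CTm.hole m A' B') = CTm.hole m A' B' from
          dif_neg (fun h => hm h.1)] at hp
        simp [CTm.holesOf] at hp
        subst hp
        exact ⟨by simp [CTm.holesOf], hm⟩
  | _, _, .seq a b, H, p, hp => by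
      replace hp : p ∈ ((CTm.fill n u a).seq (CTm.fill n u b)).holesOf := hp
      simp only [CTm.holesOf, List.mem_append] at hp ⊢
      rcases hp with hp | hp
      · obtain ⟨h1, h2⟩ := CTm.holesOf_fill n u hu a
          (fun q hq => H q (by simp [CTm.holesOf, hq])) p hp
        exact ⟨Or.inl h1, h2⟩
      · obtain ⟨h1, h2⟩ := CTm.holesOf_fill n u hu b
          (fun q hq => H q (by simp [CTm.holesOf, hq])) p hp
        exact ⟨Or.inr h1, h2⟩
  | _, _, .par a b, H, p, hp => by
      replace hp : p ∈ ((CTm.fill n u a).par (CTm.fill n u b)).holesOf := hp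
      simp only [CTm.holesOf, List.mem_append] at hp ⊢
      rcases hp with hp | hp
      · obtain ⟨h1, h2⟩ := CTm.holesOf_fill n u hu a
          (fun q hq => H q (by simp [CTm.holesOf, hq])) p hp
        exact ⟨Or.inl h1, h2⟩
      · obtain ⟨h1, h2⟩ := CTm.holesOf_fill n u hu b
          (fun q hq => H q (by simp [CTm.holesOf, hq])) p hp
        exact ⟨Or.inr h1, h2⟩

/-- Image of a grammar under a strict monoidal functor. -/
def CFG.mapG (F : SMF C D) (𝒢 : CFG C) : CFG D where
  V := 𝒢.V
  finV := 𝒢.finV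
  ty v := (F.obj (𝒢.ty v).1, F.obj (𝒢.ty v).2)
  Prd := 𝒢.Prd
  finP := 𝒢.finP
  rule r := (𝒢.rule r).mapF F
  rule_holes {l Y} r := by
    rw [CTm.holesOf_mapF]
    have hzip : ∀ (ns : List ℕ) (ps : List (C × C)),
        List.map (fun p => (p.1, F.obj p.2.1, F.obj p.2.2)) (ns.zip ps) =
          ns.zip (ps.map (fun q => (F.obj q.1, F.obj q.2))) := by
      intro ns ps
      induction ns generalizing ps with
      | nil => simp
      | cons n ns ih => cases ps <;> simp [ih]
    have := (𝒢.rule_holes r).map (fun p => (p.1, F.obj p.2.1, F.obj p.2.2))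
    refine this.trans (List.Perm.of_eq ?_)
    rw [hzip, List.map_map]
    rfl

mutual
/-- Transport of derivations to the image grammar. -/
def CFG.toD (F : SMF C D) (𝒢 : CFG C) : ∀ {v : 𝒢.V}, CFG.Deriv 𝒢 v →
    CFG.Deriv (CFG.mapG F 𝒢) v
  | _, .node r ds => .node r (CFG.toDL F 𝒢 ds)
def CFG.toDL (F : SMF C D) (𝒢 : CFG C) : ∀ {l : List 𝒢.V}, CFG.DerivList 𝒢 l →
    CFG.DerivList (CFG.mapG F 𝒢) l
  | _, .nil => .nil
  | _, .cons d ds => .cons (CFG.toD F 𝒢 d) (CFG.toDL F 𝒢 ds)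
end

mutual
/-- Transport of derivations from the image grammar. -/
def CFG.ofD (F : SMF C D) (𝒢 : CFG C) : ∀ {v : 𝒢.V}, CFG.Deriv (CFG.mapG F 𝒢) v →
    CFG.Deriv 𝒢 v
  | _, .node r ds => .node r (CFG.ofDL F 𝒢 ds)
def CFG.ofDL (F : SMF C D) (𝒢 : CFG C) : ∀ {l : List 𝒢.V},
    CFG.DerivList (CFG.mapG F 𝒢) l → CFG.DerivList 𝒢 l
  | _, .nil => .nil
  | _, .cons d ds => .cons (CFG.ofD F 𝒢 d) (CFG.ofDL F 𝒢 ds)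
end

mutual
theorem CFG.toD_ofD (F : SMF C D) (𝒢 : CFG C) : ∀ {v : 𝒢.V}
    (d : CFG.Deriv (CFG.mapG F 𝒢) v), CFG.toD F 𝒢 (CFG.ofD F 𝒢 d) = d
  | _, .node r ds => by
    show CFG.Deriv.node r (CFG.toDL F 𝒢 (CFG.ofDL F 𝒢 ds)) = _
    exact congrArg (CFG.Deriv.node r) (CFG.toDL_ofDL F 𝒢 ds)
theorem CFG.toDL_ofDL (F : SMF C D) (𝒢 : CFG C) : ∀ {l : List 𝒢.V}
    (ds : CFG.DerivList (CFG.mapG F 𝒢) l), CFG.toDL F 𝒢 (CFG.ofDL F 𝒢 ds) = ds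
  | _, .nil => rfl
  | _, .cons d ds => by
    show CFG.DerivList.cons (CFG.toD F 𝒢 (CFG.ofD F 𝒢 d)) (CFG.toDL F 𝒢 (CFG.ofDL F 𝒢 ds)) = _
    exact congrArg₂ CFG.DerivList.cons (CFG.toD_ofD F 𝒢 d) (CFG.toDL_ofDL F 𝒢 ds)
end

mutual
theorem CFG.evalTm_toD [DecidableEq C] [DecidableEq D] (F : SMF C D) (𝒢 : CFG C) :
    ∀ {v : 𝒢.V} (d : CFG.Deriv 𝒢 v),
    (CFG.evalTm d).holesOf = [] ∧
      CFG.evalTm (CFG.toD F 𝒢 d) = (CFG.evalTm d).mapF F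
  | _, .node (l := l) r ds => by
      have H : ∀ p ∈ (𝒢.rule r).holesOf, ∃ i, ∃ hi : i < l.length,
          p.1 = 0 + i ∧ p.2 = 𝒢.ty l[i] := by
        intro p hp
        have hp' := (𝒢.rule_holes r).mem_iff.mp hp
        obtain ⟨i, hi⟩ := List.get_of_mem hp'
        have hlen : i.1 < l.length := by
          have := i.2; simpa using lt_of_lt_of_le this (by simp)
        refine ⟨i.1, hlen, ?_, ?_⟩
        · have : p.1 = ((List.range l.length).zip (l.map 𝒢.ty))[i.1].1 := by
            rw [← List.get_eq_getElem, hi]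
          simpa using this
        · have : p.2 = ((List.range l.length).zip (l.map 𝒢.ty))[i.1].2 := by
            rw [← List.get_eq_getElem, hi]
          simpa using this
      exact CFG.fillListFrom_toDL F 𝒢 ds 0 (𝒢.rule r) H
theorem CFG.fillListFrom_toDL [DecidableEq C] [DecidableEq D] (F : SMF C D) (𝒢 : CFG C) :
    ∀ {l : List 𝒢.V} (ds : CFG.DerivList 𝒢 l) {X Y : C} (k : ℕ) (t : CTm C X Y),
    (∀ p ∈ t.holesOf, ∃ i, ∃ hi : i < l.length, p.1 = k + i ∧ p.2 = 𝒢.ty l[i]) →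
    (CFG.fillListFrom k ds t).holesOf = [] ∧
      CFG.fillListFrom (𝒢 := CFG.mapG F 𝒢) k (CFG.toDL F 𝒢 ds) (t.mapF F) =
        (CFG.fillListFrom k ds t).mapF F
  | _, .nil, X, Y, k, t, H => by
      have ht : t.holesOf = [] := by
        rw [List.eq_nil_iff_forall_not_mem]
        intro p hp
        obtain ⟨i, hi, _⟩ := H p hp
        simp at hi
      exact ⟨ht, rfl⟩
  | _, .cons (v := v) (l := l') d ds, X, Y, k, t, H => by
      obtain ⟨hdA, hdB⟩ := CFG.evalTm_toD F 𝒢 d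
      have Hk : ∀ p ∈ t.holesOf, p.1 = k → p.2.1 = (𝒢.ty v).1 ∧ p.2.2 = (𝒢.ty v).2 := by
        intro p hp hpk
        obtain ⟨i, hi, h1, h2⟩ := H p hp
        have : i = 0 := by omega
        subst this
        simp at h2
        rw [h2]
        exact ⟨rfl, rfl⟩
      have hrem := CTm.holesOf_fill k (CFG.evalTm d) hdA t Hk
      have H' : ∀ p ∈ (CTm.fill k (CFG.evalTm d) t).holesOf,
          ∃ i, ∃ hi : i < l'.length, p.1 = (k + 1) + i ∧ p.2 = 𝒢.ty l'[i] := by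
        intro p hp
        obtain ⟨hpt, hpk⟩ := hrem p hp
        obtain ⟨i, hi, h1, h2⟩ := H p hpt
        cases i with
        | zero => exact absurd h1 (by simpa using hpk)
        | succ j =>
            refine ⟨j, by simpa using hi, by omega, ?_⟩
            simpa using h2
      obtain ⟨ih1, ih2⟩ := CFG.fillListFrom_toDL F 𝒢 ds (k + 1)
        (CTm.fill k (CFG.evalTm d) t) H'
      refine ⟨ih1, ?_⟩
      show CFG.fillListFrom (𝒢 := CFG.mapG F 𝒢) (k + 1) (CFG.toDL F 𝒢 ds)
          (CTm.fill k (CFG.evalTm (CFG.toD F 𝒢 d)) (t.mapF F)) =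
        (CFG.fillListFrom (k + 1) ds (CTm.fill k (CFG.evalTm d) t)).mapF F
      rw [hdB]
      exact (congrArg (CFG.fillListFrom (𝒢 := CFG.mapG F 𝒢) (k + 1) (CFG.toDL F 𝒢 ds))
        (CTm.mapF_fill F k (CFG.evalTm d) t Hk).symm).trans ih2
end

theorem CFG.lang_mapG [DecidableEq C] [DecidableEq D] (F : SMF C D) (𝒢 : CFG C)
    (S : 𝒢.V) : (CFG.mapG F 𝒢).lang S = F.map '' 𝒢.lang S := by
  ext f
  constructor
  · rintro ⟨d', hd'⟩
    rw [← CFG.toD_ofD F 𝒢 d', (CFG.evalTm_toD F 𝒢 (CFG.ofD F 𝒢 d')).2] at hd'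
    replace hd' := (CTm.evalO_mapF F (CFG.evalTm (CFG.ofD F 𝒢 d'))).symm.trans hd'
    obtain ⟨g, hg1, hg2⟩ := Option.map_eq_some_iff.mp hd'
    exact ⟨g, ⟨CFG.ofD F 𝒢 d', hg1⟩, hg2⟩
  · rintro ⟨g, ⟨d, hd⟩, rfl⟩
    exact ⟨CFG.toD F 𝒢 d, by
      rw [(CFG.evalTm_toD F 𝒢 d).2]; exact (CTm.evalO_mapF F _).trans (congrArg (Option.map F.map) hd)⟩

end Aux

/-- Context-free monoidal languages are closed under images of strict monoidal
functors. -/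
theorem cf_functor_image (C : Type u) (D : Type u')
    [Category.{v} C] [Monoid C] [SMC C] [DecidableEq C]
    [Category.{v'} D] [Monoid D] [SMC D] [DecidableEq D]
    (F : SMF C D) (𝒢 : CFG C) (S : 𝒢.V) (X Y : C) (h : 𝒢.ty S = (X, Y)) :
    ∃ (𝒢' : CFG D) (S' : 𝒢'.V) (h' : 𝒢'.ty S' = (F.obj X, F.obj Y)),
      𝒢'.langAt S' h' = F.map '' 𝒢.langAt S h := by
  refine ⟨CFG.mapG F 𝒢, S, by
    show ((F.obj (𝒢.ty S).1, F.obj (𝒢.ty S).2) : D × D) = _; rw [h], ?_⟩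
  ext f
  simp only [CFG.langAt, CFG.lang_mapG, Set.mem_setOf_eq, Set.mem_image]
  constructor
  · rintro ⟨g, ⟨g₀, hg₀, rfl⟩, rfl⟩
    refine ⟨eqToHom (congrArg Prod.fst h).symm ≫ g₀ ≫ eqToHom (congrArg Prod.snd h),
      ⟨g₀, hg₀, rfl⟩, ?_⟩
    rw [F.map_comp, F.map_comp, SMF.map_eqToHom, SMF.map_eqToHom]; rfl
  · rintro ⟨x, ⟨g₀, hg₀, rfl⟩, rfl⟩
    refine ⟨F.map g₀, ⟨g₀, hg₀, rfl⟩, ?_⟩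
    rw [F.map_comp, F.map_comp, SMF.map_eqToHom, SMF.map_eqToHom]; rfl
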